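/- The powers of the linear map M grow quadratically: there exist real constants c₁ > 0, c₂ > 0 and a natural number N such that for all n ≥ N, c₁·n² ≤ max_{i,j} |(Mⁿ)_{ij}| ≤ c₂·n², where (Mⁿ)_{ij} are the entries of the n-th power of the 32×32 integer matrix representing M. (This expresses the quadratic degree growth, and hence zero algebraic entropy, of the 4-dimensional extension of the q-Painlevé I map.) -/

import Mathlib

/-- The lattice L = ℤ³², with basis H_{q₁}, H_{p₁}, H_{q₂}, H_{p₂}, E₁, …, E₂₈. -/
abbrev L : Type := Fin 32 → ℤ

/-- The i-th standard basis vector (0-indexed). -/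
def bv (i : ℕ) : L := fun j => if (j : ℕ) = i then 1 else 0

def Hq1 : L := bv 0
def Hp1 : L := bv 1
def Hq2 : L := bv 2
def Hp2 : L := bv 3

/-- E i, for 1 ≤ i ≤ 28, is the (i+3)-rd basis vector. -/
def E (i : ℕ) : L := bv (i + 3)

/-- Images of the basis vectors under the pushforward map M. -/
def Mimg : Fin 32 → L := fun j =>
  match (j : ℕ) with
  | 0 => Hp2
  | 1 => Hq2 + Hp1 + Hp2
      - (E 8 + E 9 + E 12 + E 15 + E 16 + E 19 + E 21 + E 22 + E 23 + E 25 + E 27)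
  | 2 => Hp1
  | 3 => Hq1 + Hp1 + Hp2
      - (E 1 + E 2 + E 5 + E 7 + E 8 + E 9 + E 11 + E 13 + E 22 + E 23 + E 26)
  | 4 => E 25
  | 5 => Hp2 - (E 22 + E 23 + E 25 + E 26 + E 27)
  | 6 => E 28
  | 7 => E 22
  | 8 => E 27
  | 9 => E 26
  | 10 => E 24
  | 11 => E 6
  | 12 => E 2
  | 13 => E 3
  | 14 => E 4
  | 15 => Hp1 - (E 2 + E 6 + E 15 + E 16 + E 19 + E 22 + E 25)
  | 16 => E 1
  | 17 => Hp2 - E 21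
  | 18 => E 11
  | 19 => Hp1 - (E 8 + E 9 + E 11 + E 12 + E 13)
  | 20 => E 14
  | 21 => E 8
  | 22 => E 13
  | 23 => E 12
  | 24 => E 10
  | 25 => E 20
  | 26 => E 16
  | 27 => E 17
  | 28 => E 18
  | 29 => Hp2 - (E 1 + E 2 + E 5 + E 8 + E 11 + E 16 + E 20)
  | 30 => E 15
  | 31 => Hp1 - E 7
  | _ => 0

/-- The ℤ-linear map M : L → L determined by its values on the basis. -/
def M : L → L := fun v => ∑ j : Fin 32, v j • Mimg j

/-- The 32×32 integer matrix representing M: its (i,j) entry is the i-th coordinate of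
the image under M of the j-th basis vector. -/
def Mmat : Matrix (Fin 32) (Fin 32) ℤ := Matrix.of fun i j => Mimg j i


-- ===== auxiliary definitions and lemmas =====
def mkM (l : List (List ℤ)) : Matrix (Fin 32) (Fin 32) ℤ :=
  Matrix.of fun i j => (l.getD (i:ℕ) []).getD (j:ℕ) 0
def Cm1 : Matrix (Fin 32) (Fin 32) ℤ := mkM [[0,0,0,1,0,0,0,0,0,0,0,0,0,0,0,0,0,0,0,0,0,0,0,0,0,0,0,0,0,0,0,0],[0,1,1,1,0,0,0,0,0,0,0,0,0,0,0,1,0,0,0,1,0,0,0,0,0,0,0,0,0,0,0,1],[0,1,0,0,0,0,0,0,0,0,0,0,0,0,0,0,0,0,0,0,0,0,0,0,0,0,0,0,0,0,0,0],[1,1,0,1,0,1,0,0,0,0,0,0,0,0,0,0,0,1,0,0,0,0,0,0,0,0,0,0,0,1,0,0],[0,0,0,-1,0,0,0,0,0,0,0,0,0,0,0,0,1,0,0,0,0,0,0,0,0,0,0,0,0,-1,0,0],[0,0,0,-1,0,0,0,0,0,0,0,0,1,0,0,-1,0,0,0,0,0,0,0,0,0,0,0,0,0,-1,0,0],[0,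0,0,0,0,0,0,0,0,0,0,0,0,1,0,0,0,0,0,0,0,0,0,0,0,0,0,0,0,0,0,0],[0,0,0,0,0,0,0,0,0,0,0,0,0,0,1,0,0,0,0,0,0,0,0,0,0,0,0,0,0,0,0,0],[0,0,0,-1,0,0,0,0,0,0,0,0,0,0,0,0,0,0,0,0,0,0,0,0,0,0,0,0,0,-1,0,0],[0,0,0,0,0,0,0,0,0,0,0,1,0,0,0,-1,0,0,0,0,0,0,0,0,0,0,0,0,0,0,0,0],[0,0,0,-1,0,0,0,0,0,0,0,0,0,0,0,0,0,0,0,0,0,0,0,0,0,0,0,0,0,0,0,-1],[0,-1,0,-1,0,0,0,0,0,0,0,0,0,0,0,0,0,0,0,-1,0,1,0,0,0,0,0,0,0,-1,0,0],[0,-1,0,-1,0,0,0,0,0,0,0,0,0,0,0,0,0,0,0,-1,0,0,0,0,0,0,0,0,0,0,0,0],[0,0,0,0,0,0,0,0,0,0,0,0,0,0,0,0,0,0,0,0,0,0,0,0,1,0,0,0,0,0,0,0],[0,0,0,-1,0,0,0,0,0,0,0,0,0,0,0,0,0,0,1,-1,0,0,0,0,0,0,0,0,0,-1,0,0],[0,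-1,0,0,0,0,0,0,0,0,0,0,0,0,0,0,0,0,0,-1,0,0,0,1,0,0,0,0,0,0,0,0],[0,0,0,-1,0,0,0,0,0,0,0,0,0,0,0,0,0,0,0,-1,0,0,1,0,0,0,0,0,0,0,0,0],[0,0,0,0,0,0,0,0,0,0,0,0,0,0,0,0,0,0,0,0,1,0,0,0,0,0,0,0,0,0,0,0],[0,-1,0,0,0,0,0,0,0,0,0,0,0,0,0,-1,0,0,0,0,0,0,0,0,0,0,0,0,0,0,1,0],[0,-1,0,0,0,0,0,0,0,0,0,0,0,0,0,-1,0,0,0,0,0,0,0,0,0,0,1,0,0,-1,0,0],[0,0,0,0,0,0,0,0,0,0,0,0,0,0,0,0,0,0,0,0,0,0,0,0,0,0,0,1,0,0,0,0],[0,0,0,0,0,0,0,0,0,0,0,0,0,0,0,0,0,0,0,0,0,0,0,0,0,0,0,0,1,0,0,0],[0,-1,0,0,0,0,0,0,0,0,0,0,0,0,0,-1,0,0,0,0,0,0,0,0,0,0,0,0,0,0,0,0],[0,0,0,0,0,0,0,0,0,0,0,0,0,0,0,0,0,0,0,0,0,0,0,0,0,1,0,0,0,-1,0,0],[0,-1,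0,0,0,0,0,0,0,0,0,0,0,0,0,0,0,-1,0,0,0,0,0,0,0,0,0,0,0,0,0,0],[0,-1,0,-1,0,-1,0,1,0,0,0,0,0,0,0,-1,0,0,0,0,0,0,0,0,0,0,0,0,0,0,0,0],[0,-1,0,-1,0,-1,0,0,0,0,0,0,0,0,0,0,0,0,0,0,0,0,0,0,0,0,0,0,0,0,0,0],[0,0,0,0,0,0,0,0,0,0,1,0,0,0,0,0,0,0,0,0,0,0,0,0,0,0,0,0,0,0,0,0],[0,-1,0,0,1,-1,0,0,0,0,0,0,0,0,0,-1,0,0,0,0,0,0,0,0,0,0,0,0,0,0,0,0],[0,0,0,-1,0,-1,0,0,0,1,0,0,0,0,0,0,0,0,0,0,0,0,0,0,0,0,0,0,0,0,0,0],[0,-1,0,0,0,-1,0,0,1,0,0,0,0,0,0,0,0,0,0,0,0,0,0,0,0,0,0,0,0,0,0,0],[0,0,0,0,0,0,1,0,0,0,0,0,0,0,0,0,0,0,0,0,0,0,0,0,0,0,0,0,0,0,0,0]]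
def Cm2 : Matrix (Fin 32) (Fin 32) ℤ := mkM [[1,1,0,1,0,1,0,0,0,0,0,0,0,0,0,0,0,1,0,0,0,0,0,0,0,0,0,0,0,1,0,0],[1,1,1,2,0,1,1,0,0,0,0,0,0,0,0,0,0,1,0,0,0,0,0,1,0,0,1,0,0,0,0,1],[0,1,1,1,0,0,0,0,0,0,0,0,0,0,0,1,0,0,0,1,0,0,0,0,0,0,0,0,0,0,0,1],[1,2,1,1,0,0,0,0,0,1,0,0,1,0,0,0,0,1,0,1,1,0,0,0,0,0,0,0,0,0,0,1],[-1,-1,0,-1,0,0,0,0,0,-1,0,0,0,0,0,0,0,-1,0,-1,0,0,1,0,0,0,0,0,0,-1,0,0],[-1,-1,0,-1,0,0,0,0,0,-1,0,0,0,0,0,0,0,-1,0,0,0,0,0,-1,0,0,0,0,0,-1,0,0],[0,0,0,0,0,0,0,0,0,0,0,0,0,0,0,0,0,0,0,0,0,0,0,0,1,0,0,0,0,0,0,0],[0,0,0,-1,0,0,0,0,0,0,0,0,0,0,0,0,0,0,1,-1,0,0,0,0,0,0,0,0,0,-1,0,0],[-1,-1,0,0,0,0,0,0,0,-1,0,0,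0,0,0,0,0,-1,0,0,0,0,0,0,0,0,0,0,0,-1,0,0],[0,0,0,-1,0,0,0,0,0,0,0,0,0,0,0,0,0,0,0,0,0,1,0,-1,0,0,0,0,0,-1,0,0],[-1,-1,0,-1,0,-1,-1,0,0,0,0,0,0,0,0,0,0,-1,0,0,0,0,0,0,0,0,0,0,0,-1,0,0],[-1,-1,-1,-1,0,0,0,0,0,-1,0,0,0,0,0,0,0,-1,0,-1,0,0,0,0,0,0,-1,0,1,0,0,-1],[-1,-1,-1,-2,0,-1,0,0,0,0,0,0,0,0,0,0,0,-1,0,-1,0,0,0,0,0,0,-1,0,0,0,0,-1],[0,-1,0,0,0,0,0,0,0,0,0,0,0,0,0,0,0,-1,0,0,0,0,0,0,0,0,0,0,0,0,0,0],[-1,-1,0,0,0,0,0,0,0,-1,0,0,0,0,0,0,0,-1,0,0,0,0,0,0,0,0,-1,0,0,0,1,0],[0,0,-1,-1,0,0,0,0,0,0,0,0,0,0,0,0,0,0,0,-1,0,0,0,0,0,1,-1,0,0,0,0,-1],[-1,-1,0,-1,0,-1,0,0,0,0,0,0,0,0,0,0,0,-1,0,0,0,0,0,0,0,0,-1,0,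0,0,0,0],[0,0,0,0,0,0,0,0,0,0,0,0,0,0,0,0,0,0,0,0,0,0,0,0,0,0,0,1,0,0,0,0],[0,-1,-1,-1,0,-1,0,0,1,0,0,0,0,0,0,-1,0,0,0,0,0,0,0,-1,0,0,0,0,0,0,0,-1],[0,-1,-1,-1,0,0,0,0,0,-1,0,0,0,0,0,-1,0,0,0,0,0,0,0,-1,0,0,0,0,0,0,0,-1],[0,0,0,0,0,0,0,0,0,0,1,0,0,0,0,0,0,0,0,0,0,0,0,0,0,0,0,0,0,0,0,0],[0,-1,0,0,1,-1,0,0,0,0,0,0,0,0,0,-1,0,0,0,0,0,0,0,0,0,0,0,0,0,0,0,0],[0,0,-1,-1,0,0,0,0,0,0,0,0,0,0,0,-1,0,0,0,0,0,0,0,-1,0,0,0,0,0,0,0,-1],[0,-1,0,0,0,0,0,1,0,-1,0,0,0,0,0,-1,0,0,0,0,0,0,0,0,0,0,0,0,0,0,0,0],[0,-1,-1,-1,0,0,0,0,0,0,0,0,0,0,0,-1,0,0,0,-1,-1,0,0,0,0,0,0,0,0,0,0,-1],[-1,-1,-1,-1,0,-1,0,0,0,0,0,0,-1,0,1,0,0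,-1,0,0,0,0,0,-1,0,0,0,0,0,0,0,-1],[-1,-2,-1,-1,0,-1,0,0,0,0,0,0,-1,0,0,0,0,-1,0,-1,0,0,0,0,0,0,0,0,0,0,0,-1],[0,0,0,-1,0,0,0,0,0,0,0,0,0,0,0,0,0,0,0,0,0,0,0,0,0,0,0,0,0,0,0,-1],[0,0,-1,-1,0,0,0,0,0,0,0,0,-1,0,0,0,1,0,0,0,0,0,0,-1,0,0,0,0,0,0,0,-1],[-1,-1,0,0,0,-1,0,0,0,0,0,1,-1,0,0,0,0,-1,0,0,0,0,0,0,0,0,0,0,0,0,0,0],[0,-1,-1,-1,0,0,0,0,0,0,0,0,-1,0,0,0,0,0,0,-1,0,0,0,0,0,0,0,0,0,0,0,-1],[0,0,0,0,0,0,0,0,0,0,0,0,0,1,0,0,0,0,0,0,0,0,0,0,0,0,0,0,0,0,0,0]]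
def Cm4 : Matrix (Fin 32) (Fin 32) ℤ := mkM [[1,2,2,3,0,1,1,0,0,0,0,1,0,0,0,0,0,1,0,1,1,0,0,0,0,0,1,1,0,0,0,2],[2,3,3,4,0,1,1,1,0,0,0,0,1,1,0,0,0,2,0,2,2,0,0,0,1,0,1,1,0,0,0,3],[2,3,1,2,0,1,1,0,0,0,0,0,1,1,0,0,0,2,0,1,1,0,0,0,0,1,0,0,0,0,0,1],[3,4,2,3,0,2,2,0,0,0,1,0,1,1,0,0,0,3,0,1,1,1,0,0,0,0,1,1,0,0,0,2],[-2,-2,-2,-3,0,-1,-1,0,0,0,0,-1,0,0,0,0,0,-2,0,-1,-1,-1,0,0,0,0,-1,-1,0,0,0,-2],[-2,-2,-2,-3,0,-1,-1,-1,0,0,0,-1,0,0,0,1,0,-2,0,-1,-1,-1,0,0,0,0,-1,-1,0,0,0,-2],[0,-1,-1,-1,0,0,0,0,0,0,0,0,0,0,0,-1,0,0,0,-1,-1,0,0,0,0,0,0,0,0,0,0,-1],[0,-1,-1,-1,0,0,0,0,1,0,0,-1,0,0,0,0,0,0,0,-1,-1,0,0,0,0,0,0,0,0,0,0,-1],[-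1,-1,-1,-2,0,-1,-1,0,0,0,0,-1,1,0,0,0,0,-1,0,0,0,-1,0,0,0,0,-1,-1,0,0,0,-1],[0,-1,-1,-1,1,0,0,-1,0,0,0,-1,0,0,0,0,0,0,0,-1,-1,0,0,0,0,0,0,0,0,0,0,-1],[-1,-2,-2,-3,0,-1,-1,0,0,0,0,-1,0,0,0,0,0,-1,0,-1,-1,0,0,0,-1,0,-1,-1,0,0,0,-2],[-2,-2,-2,-3,0,-1,-1,0,0,0,0,0,-1,-1,0,0,1,-2,0,-1,-1,-1,0,0,0,0,-1,-1,0,0,0,-2],[-2,-3,-2,-3,0,-1,-1,0,0,0,0,0,-1,-1,0,0,0,-2,0,-2,-2,0,0,1,0,0,-1,-1,0,0,0,-2],[-1,-1,-1,-2,0,-1,-1,0,0,0,0,0,0,0,0,0,0,-1,0,0,0,0,0,-1,0,0,-1,-1,0,0,0,-1],[-1,-1,-1,-2,0,-1,-1,0,0,0,0,0,0,0,0,0,0,-1,0,0,0,-1,0,0,0,0,-1,-1,0,0,0,-1],[-1,-1,-1,-1,0,0,0,0,0,0,0,0,-1,-1,1,0,0,-1,0,-1,-1,0,0,0,0,0,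0,0,0,0,0,-1],[-1,-1,-1,-2,0,-1,-1,0,0,0,0,0,0,0,0,0,0,-1,0,0,-1,0,0,0,0,0,-1,-1,0,0,0,-1],[0,0,0,-1,0,0,0,0,0,0,0,0,0,0,0,0,0,0,0,0,0,0,0,0,0,0,0,0,0,0,0,-1],[-2,-3,-2,-2,0,-1,-1,-1,0,0,0,0,-1,-1,0,0,0,-2,0,-1,-1,0,0,0,0,-1,0,0,0,0,0,-2],[-2,-3,-2,-2,0,-1,-1,-1,0,0,0,0,-1,-1,0,0,0,-2,0,-1,-1,-1,0,0,0,-1,0,0,0,1,0,-2],[-1,-1,0,-1,0,-1,-1,0,0,0,0,0,0,0,0,0,0,-1,0,0,0,0,0,0,0,0,0,0,0,-1,0,0],[-1,-1,0,-1,0,-1,-1,0,0,0,0,0,0,0,0,0,0,-1,0,0,0,0,1,0,0,-1,0,0,0,0,0,0],[-1,-2,-1,-1,0,0,0,-1,0,0,0,0,-1,-1,0,0,0,-1,0,-1,-1,0,0,0,0,-1,1,0,0,0,0,-1],[-1,-1,0,-1,0,-1,-1,0,0,0,0,0,0,0,0,0,0,-1,1,0,0,-1,0,0,0,-1,0,0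,0,0,0,0],[-2,-3,-1,-2,0,-1,-1,0,0,0,-1,0,-1,-1,0,0,0,-2,0,-1,-1,0,0,0,0,-1,0,0,0,0,0,-1],[-2,-3,-2,-2,0,-1,-1,-1,0,0,0,0,-1,-1,0,0,0,-2,0,-1,-1,0,0,0,0,0,-1,-1,0,0,1,-2],[-2,-3,-2,-3,0,-2,-2,0,0,1,0,0,-1,-1,0,0,0,-2,0,-1,-1,0,0,0,0,0,-1,-1,0,0,0,-2],[-1,-2,-1,-1,0,0,0,0,0,-1,0,0,-1,-1,0,0,0,-1,0,-1,-1,0,0,0,0,0,0,0,0,0,0,-1],[-1,-2,-1,-1,0,0,0,-1,0,0,0,0,-1,-1,0,0,0,-1,0,-1,-1,0,0,0,0,0,0,0,0,0,0,-1],[-1,-1,-1,-1,0,-1,-1,0,0,0,0,0,0,0,0,0,0,-1,0,0,0,0,0,0,0,0,-1,-1,1,0,0,-1],[-1,-2,-1,-1,0,0,-1,0,0,0,0,0,-1,-1,0,0,0,-1,0,-1,-1,0,0,0,0,0,0,0,0,0,0,-1],[0,-1,0,0,0,0,0,0,0,0,0,0,0,0,0,0,0,-1,0,0,0,0,0,0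,0,0,0,0,0,0,0,0]]
def Cm8 : Matrix (Fin 32) (Fin 32) ℤ := mkM [[8,10,6,9,0,5,5,0,0,0,3,0,3,3,0,0,1,6,0,4,4,0,0,0,2,1,3,3,0,0,0,5],[10,11,9,12,0,6,6,0,1,0,3,0,4,4,0,0,0,7,0,5,5,1,0,0,3,0,5,5,0,0,0,7],[6,9,8,10,0,4,4,0,0,0,2,1,3,3,0,0,0,5,0,5,5,0,0,0,3,0,3,3,0,0,1,6],[9,12,10,11,0,5,5,1,0,0,3,0,5,5,0,0,0,7,0,6,6,0,1,0,3,0,4,4,0,0,0,7],[-8,-11,-8,-10,0,-5,-5,0,0,0,-3,-1,-3,-3,0,0,-1,-6,0,-5,-5,0,-1,0,-2,0,-4,-4,0,0,0,-6],[-9,-11,-8,-10,0,-5,-5,0,-1,0,-3,0,-4,-4,1,0,-1,-7,0,-5,-5,0,-1,0,-2,0,-4,-4,0,0,0,-6],[-3,-4,-3,-5,0,-2,-2,0,0,0,-1,0,-1,-1,-1,0,0,-2,0,-2,-2,0,0,0,-1,0,-2,-2,0,0,0,-3],[-3,-4,-3,-5,0,-2,-2,0,0,0,-1,-1,0,-1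,0,0,-1,-2,0,-2,-2,0,0,0,-1,0,-2,-2,0,0,0,-3],[-5,-7,-4,-5,0,-3,-3,0,0,0,-2,0,-2,-2,0,0,-1,-4,0,-3,-3,0,-1,1,-1,0,-2,-2,0,0,0,-3],[-4,-4,-3,-5,0,-2,-2,0,-1,0,-1,0,-1,-1,0,0,-1,-3,0,-2,-2,0,0,0,-1,0,-2,-2,0,0,0,-3],[-6,-7,-5,-7,0,-4,-4,0,0,0,-2,0,-2,-2,0,0,-1,-4,0,-3,-3,0,0,0,-2,0,-3,-3,0,0,0,-4],[-8,-10,-8,-10,0,-5,-5,0,0,0,-3,-1,-3,-3,0,0,0,-6,0,-4,-5,-1,-1,0,-2,0,-4,-4,0,0,0,-6],[-8,-10,-8,-11,0,-5,-5,0,0,0,-3,-1,-3,-3,0,0,0,-6,1,-5,-5,-1,0,0,-3,-1,-4,-4,0,0,0,-6],[-5,-6,-4,-5,0,-3,-3,0,0,0,-2,0,-2,-2,0,0,0,-4,-1,-2,-2,0,0,0,-1,0,-2,-2,0,0,0,-3],[-5,-6,-4,-5,0,-3,-3,0,0,0,-2,0,-2,-2,0,0,0,-4,0,-2,-2,-1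,-1,0,-1,0,-2,-2,0,0,0,-3],[-3,-4,-4,-5,0,-2,-2,0,0,0,-1,-1,-1,-1,0,0,0,-2,0,-2,-2,-1,0,0,-1,0,-2,-2,0,0,0,-3],[-5,-6,-4,-5,0,-3,-3,0,0,0,-2,0,-2,-2,0,0,0,-4,0,-2,-2,-1,0,0,-1,-1,-2,-2,0,1,0,-3],[-3,-3,-2,-3,0,-2,-2,0,0,0,-1,0,-1,-1,0,0,0,-2,0,-1,-1,-1,0,0,0,0,-1,-1,0,0,0,-2],[-8,-10,-8,-11,0,-5,-5,0,-1,0,-2,0,-4,-4,0,0,0,-6,0,-5,-5,0,0,0,-3,-1,-3,-3,0,0,-1,-6],[-8,-10,-9,-11,0,-5,-5,0,-1,0,-2,0,-4,-4,0,0,0,-6,0,-5,-5,0,-1,0,-3,0,-4,-4,1,0,-1,-7],[-3,-5,-3,-4,0,-2,-2,0,0,0,-1,0,-2,-2,0,0,0,-3,0,-2,-2,0,0,0,-1,0,-1,-1,-1,0,0,-2],[-3,-5,-3,-4,0,-2,-2,0,0,0,-1,0,-2,-2,0,0,0,-3,0,-2,-2,0,0,0,-1,-1,0,-1,0,0,-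1,-2],[-4,-5,-5,-7,0,-3,-3,0,-1,1,-1,0,-2,-2,0,0,0,-3,0,-3,-3,0,0,0,-2,0,-2,-2,0,0,-1,-4],[-3,-5,-4,-4,0,-2,-2,0,0,0,-1,0,-2,-2,0,0,0,-3,0,-2,-2,0,-1,0,-1,0,-1,-1,0,0,-1,-3],[-5,-7,-6,-7,0,-3,-3,0,0,0,-2,0,-3,-3,0,0,0,-4,0,-4,-4,0,0,0,-2,0,-2,-2,0,0,-1,-4],[-8,-10,-8,-10,0,-4,-5,-1,-1,0,-2,0,-4,-4,0,0,0,-6,0,-5,-5,0,0,0,-3,-1,-3,-3,0,0,0,-6],[-8,-11,-8,-10,1,-5,-5,-1,0,0,-3,-1,-4,-4,0,0,0,-6,0,-5,-5,0,0,0,-3,-1,-3,-3,0,0,0,-6],[-4,-5,-5,-6,-1,-2,-2,0,0,0,-1,0,-2,-2,0,0,0,-3,0,-3,-3,0,0,0,-2,0,-2,-2,0,0,0,-4],[-4,-5,-5,-6,0,-2,-2,-1,-1,0,-1,0,-2,-2,0,0,0,-3,0,-3,-3,0,0,0,-2,0,-2,-2,0,0,0,-4],[-4,-5,-3,-4,0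,-2,-2,-1,0,0,-1,0,-2,-2,0,0,0,-3,0,-2,-2,0,0,0,-1,-1,-1,-1,0,0,0,-2],[-4,-5,-5,-6,0,-2,-2,-1,0,0,-1,-1,-2,-2,0,1,0,-3,0,-3,-3,0,0,0,-2,0,-2,-2,0,0,0,-4],[-2,-3,-3,-3,0,-1,-1,-1,0,0,0,0,-1,-1,0,0,0,-2,0,-2,-2,0,0,0,-1,0,-1,-1,0,0,0,-2]]
def Cm12 : Matrix (Fin 32) (Fin 32) ℤ := mkM [[17,21,18,21,0,10,10,0,0,0,7,0,9,9,0,0,0,12,0,11,10,0,0,0,7,0,8,8,0,0,1,12],[21,25,21,24,0,12,12,0,0,0,9,0,11,10,0,0,0,14,0,12,12,0,1,0,8,0,10,10,0,0,0,14],[18,21,17,21,0,11,10,0,0,0,7,0,8,8,0,0,1,12,0,10,10,0,0,0,7,0,9,9,0,0,0,12],[21,24,21,25,0,12,12,0,1,0,8,0,10,10,0,0,0,14,0,12,12,0,0,0,9,0,11,10,0,0,0,14],[-19,-23,-19,-23,0,-11,-11,0,0,0,-8,0,-9,-9,0,0,-1,-13,0,-12,-11,1,0,0,-8,0,-10,-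9,0,0,0,-13],[-19,-23,-20,-23,0,-11,-11,0,0,0,-8,0,-10,-9,0,0,0,-13,0,-12,-11,0,0,0,-8,0,-10,-9,0,0,0,-13],[-9,-10,-8,-10,0,-5,-5,0,0,0,-4,0,-4,-4,0,0,0,-6,0,-5,-5,0,0,0,-3,0,-4,-4,0,0,0,-6],[-9,-11,-8,-10,0,-5,-5,0,0,0,-4,0,-4,-4,0,0,-1,-6,0,-6,-5,0,0,1,-3,0,-4,-4,0,0,0,-6],[-10,-12,-11,-13,0,-6,-6,0,0,0,-4,0,-5,-5,0,0,0,-7,1,-7,-6,0,0,0,-5,0,-6,-5,0,0,0,-7],[-9,-11,-9,-10,0,-5,-5,0,0,0,-4,0,-5,-4,0,0,0,-6,0,-6,-5,0,0,0,-3,0,-4,-4,0,0,0,-6],[-12,-14,-12,-14,0,-7,-7,0,0,0,-5,0,-6,-6,0,0,0,-8,0,-7,-6,0,0,0,-5,0,-6,-6,0,0,0,-8],[-19,-23,-19,-22,0,-11,-11,0,0,0,-8,0,-9,-9,0,0,-1,-13,0,-11,-11,0,-1,0,-7,0,-10,-9,0,1,0,-13],[-19,-23,-19,-22,0,-11,-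11,0,0,0,-8,0,-9,-9,0,0,-1,-13,0,-11,-11,0,-1,0,-7,0,-9,-9,0,0,-1,-13],[-10,-12,-10,-12,0,-6,-6,0,0,0,-4,0,-5,-5,0,0,0,-7,0,-6,-6,0,0,0,-4,0,-5,-5,0,0,0,-6],[-10,-12,-11,-12,0,-6,-6,0,0,0,-4,0,-5,-5,0,0,0,-7,0,-6,-6,0,-1,0,-4,1,-6,-5,0,0,0,-7],[-9,-11,-8,-10,0,-5,-5,0,0,0,-4,0,-4,-4,0,0,-1,-6,0,-5,-5,0,-1,0,-3,0,-4,-4,0,0,0,-6],[-10,-12,-11,-12,0,-6,-6,0,0,0,-4,0,-5,-5,0,0,0,-7,0,-6,-6,0,-1,0,-4,0,-5,-5,1,0,-1,-7],[-7,-9,-7,-8,0,-4,-4,0,0,0,-3,0,-4,-4,0,0,0,-5,0,-4,-4,0,-1,0,-2,0,-3,-3,0,0,0,-5],[-19,-23,-19,-23,0,-12,-11,1,0,0,-8,0,-10,-9,0,0,0,-13,0,-11,-11,0,0,0,-8,0,-9,-9,0,0,-1,-13],[-20,-23,-19,-23,0,-12,-11,0,0,0,-8,0,-10,-9,0,0,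0,-13,0,-11,-11,0,0,0,-8,0,-10,-9,0,0,0,-13],[-8,-10,-9,-10,0,-5,-5,0,0,0,-3,0,-4,-4,0,0,0,-6,0,-5,-5,0,0,0,-4,0,-4,-4,0,0,0,-6],[-8,-10,-9,-11,0,-6,-5,0,0,1,-3,0,-4,-4,0,0,0,-6,0,-5,-5,0,0,0,-4,0,-4,-4,0,0,-1,-6],[-11,-13,-10,-12,1,-7,-6,0,0,0,-5,0,-6,-5,0,0,0,-7,0,-6,-6,0,0,0,-4,0,-5,-5,0,0,0,-7],[-9,-10,-9,-11,0,-6,-5,0,0,0,-3,0,-4,-4,0,0,0,-6,0,-5,-5,0,0,0,-4,0,-5,-4,0,0,0,-6],[-12,-14,-12,-14,0,-7,-6,0,0,0,-5,0,-6,-6,0,0,0,-8,0,-7,-7,0,0,0,-5,0,-6,-6,0,0,0,-8],[-19,-22,-19,-23,0,-11,-11,0,-1,0,-7,0,-10,-9,0,1,0,-13,0,-11,-11,0,0,0,-8,0,-9,-9,0,0,-1,-13],[-19,-22,-19,-23,0,-11,-11,0,-1,0,-7,0,-9,-9,0,0,-1,-13,0,-11,-11,0,0,0,-8,0,-9,-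9,0,0,-1,-13],[-10,-12,-10,-12,0,-6,-6,0,0,0,-4,0,-5,-5,0,0,0,-6,0,-6,-6,0,0,0,-4,0,-5,-5,0,0,0,-7],[-11,-12,-10,-12,0,-6,-6,0,-1,0,-4,1,-6,-5,0,0,0,-7,0,-6,-6,0,0,0,-4,0,-5,-5,0,0,0,-7],[-8,-10,-9,-11,0,-5,-5,0,-1,0,-3,0,-4,-4,0,0,0,-6,0,-5,-5,0,0,0,-4,0,-4,-4,0,0,-1,-6],[-11,-12,-10,-12,0,-6,-6,0,-1,0,-4,0,-5,-5,1,0,-1,-7,0,-6,-6,0,0,0,-4,0,-5,-5,0,0,0,-7],[-7,-8,-7,-9,0,-4,-4,0,-1,0,-2,0,-3,-3,0,0,0,-5,0,-4,-4,0,0,0,-3,0,-4,-4,0,0,0,-5]]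
def Amat : Matrix (Fin 32) (Fin 32) ℤ := mkM [[24,28,24,28,0,14,14,0,0,0,10,0,12,12,0,0,0,16,0,14,14,0,0,0,10,0,12,12,0,0,0,16],[28,32,28,32,0,16,16,0,0,0,12,0,14,14,0,0,0,18,0,16,16,0,0,0,12,0,14,14,0,0,0,18],[24,28,24,28,0,14,14,0,0,0,10,0,12,12,0,0,0,16,0,14,14,0,0,0,10,0,12,12,0,0,0,16],[28,32,28,32,0,16,16,0,0,0,12,0,14,14,0,0,0,18,0,16,16,0,0,0,12,0,14,14,0,0,0,18],[-26,-30,-26,-30,0,-15,-15,0,0,0,-11,0,-13,-13,0,0,0,-17,0,-15,-15,0,0,0,-11,0,-13,-13,0,0,0,-17],[-26,-30,-26,-30,0,-15,-15,0,0,0,-11,0,-13,-13,0,0,0,-17,0,-15,-15,0,0,0,-11,0,-13,-13,0,0,0,-17],[-12,-14,-12,-14,0,-7,-7,0,0,0,-5,0,-6,-6,0,0,0,-8,0,-7,-7,0,0,0,-5,0,-6,-6,0,0,0,-8],[-12,-14,-12,-14,0,-7,-7,0,0,0,-5,0,-6,-6,0,0,0,-8,0,-7,-7,0,0,0,-5,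0,-6,-6,0,0,0,-8],[-14,-16,-14,-16,0,-8,-8,0,0,0,-6,0,-7,-7,0,0,0,-9,0,-8,-8,0,0,0,-6,0,-7,-7,0,0,0,-9],[-12,-14,-12,-14,0,-7,-7,0,0,0,-5,0,-6,-6,0,0,0,-8,0,-7,-7,0,0,0,-5,0,-6,-6,0,0,0,-8],[-16,-18,-16,-18,0,-9,-9,0,0,0,-7,0,-8,-8,0,0,0,-10,0,-9,-9,0,0,0,-7,0,-8,-8,0,0,0,-10],[-26,-30,-26,-30,0,-15,-15,0,0,0,-11,0,-13,-13,0,0,0,-17,0,-15,-15,0,0,0,-11,0,-13,-13,0,0,0,-17],[-26,-30,-26,-30,0,-15,-15,0,0,0,-11,0,-13,-13,0,0,0,-17,0,-15,-15,0,0,0,-11,0,-13,-13,0,0,0,-17],[-14,-16,-14,-16,0,-8,-8,0,0,0,-6,0,-7,-7,0,0,0,-9,0,-8,-8,0,0,0,-6,0,-7,-7,0,0,0,-9],[-14,-16,-14,-16,0,-8,-8,0,0,0,-6,0,-7,-7,0,0,0,-9,0,-8,-8,0,0,0,-6,0,-7,-7,0,0,0,-9],[-12,-14,-12,-14,0,-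7,-7,0,0,0,-5,0,-6,-6,0,0,0,-8,0,-7,-7,0,0,0,-5,0,-6,-6,0,0,0,-8],[-14,-16,-14,-16,0,-8,-8,0,0,0,-6,0,-7,-7,0,0,0,-9,0,-8,-8,0,0,0,-6,0,-7,-7,0,0,0,-9],[-10,-12,-10,-12,0,-6,-6,0,0,0,-4,0,-5,-5,0,0,0,-7,0,-6,-6,0,0,0,-4,0,-5,-5,0,0,0,-7],[-26,-30,-26,-30,0,-15,-15,0,0,0,-11,0,-13,-13,0,0,0,-17,0,-15,-15,0,0,0,-11,0,-13,-13,0,0,0,-17],[-26,-30,-26,-30,0,-15,-15,0,0,0,-11,0,-13,-13,0,0,0,-17,0,-15,-15,0,0,0,-11,0,-13,-13,0,0,0,-17],[-12,-14,-12,-14,0,-7,-7,0,0,0,-5,0,-6,-6,0,0,0,-8,0,-7,-7,0,0,0,-5,0,-6,-6,0,0,0,-8],[-12,-14,-12,-14,0,-7,-7,0,0,0,-5,0,-6,-6,0,0,0,-8,0,-7,-7,0,0,0,-5,0,-6,-6,0,0,0,-8],[-14,-16,-14,-16,0,-8,-8,0,0,0,-6,0,-7,-7,0,0,0,-9,0,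-8,-8,0,0,0,-6,0,-7,-7,0,0,0,-9],[-12,-14,-12,-14,0,-7,-7,0,0,0,-5,0,-6,-6,0,0,0,-8,0,-7,-7,0,0,0,-5,0,-6,-6,0,0,0,-8],[-16,-18,-16,-18,0,-9,-9,0,0,0,-7,0,-8,-8,0,0,0,-10,0,-9,-9,0,0,0,-7,0,-8,-8,0,0,0,-10],[-26,-30,-26,-30,0,-15,-15,0,0,0,-11,0,-13,-13,0,0,0,-17,0,-15,-15,0,0,0,-11,0,-13,-13,0,0,0,-17],[-26,-30,-26,-30,0,-15,-15,0,0,0,-11,0,-13,-13,0,0,0,-17,0,-15,-15,0,0,0,-11,0,-13,-13,0,0,0,-17],[-14,-16,-14,-16,0,-8,-8,0,0,0,-6,0,-7,-7,0,0,0,-9,0,-8,-8,0,0,0,-6,0,-7,-7,0,0,0,-9],[-14,-16,-14,-16,0,-8,-8,0,0,0,-6,0,-7,-7,0,0,0,-9,0,-8,-8,0,0,0,-6,0,-7,-7,0,0,0,-9],[-12,-14,-12,-14,0,-7,-7,0,0,0,-5,0,-6,-6,0,0,0,-8,0,-7,-7,0,0,0,-5,0,-6,-6,0,0,0,-8],[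-14,-16,-14,-16,0,-8,-8,0,0,0,-6,0,-7,-7,0,0,0,-9,0,-8,-8,0,0,0,-6,0,-7,-7,0,0,0,-9],[-10,-12,-10,-12,0,-6,-6,0,0,0,-4,0,-5,-5,0,0,0,-7,0,-6,-6,0,0,0,-4,0,-5,-5,0,0,0,-7]]
def A2mat : Matrix (Fin 32) (Fin 32) ℤ := mkM [[56,56,56,56,0,28,28,0,0,0,28,0,28,28,0,0,0,28,0,28,28,0,0,0,28,0,28,28,0,0,0,28],[56,56,56,56,0,28,28,0,0,0,28,0,28,28,0,0,0,28,0,28,28,0,0,0,28,0,28,28,0,0,0,28],[56,56,56,56,0,28,28,0,0,0,28,0,28,28,0,0,0,28,0,28,28,0,0,0,28,0,28,28,0,0,0,28],[56,56,56,56,0,28,28,0,0,0,28,0,28,28,0,0,0,28,0,28,28,0,0,0,28,0,28,28,0,0,0,28],[-56,-56,-56,-56,0,-28,-28,0,0,0,-28,0,-28,-28,0,0,0,-28,0,-28,-28,0,0,0,-28,0,-28,-28,0,0,0,-28],[-56,-56,-56,-56,0,-28,-28,0,0,0,-28,0,-28,-28,0,0,0,-28,0,-28,-28,0,0,0,-2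8,0,-28,-28,0,0,0,-28],[-28,-28,-28,-28,0,-14,-14,0,0,0,-14,0,-14,-14,0,0,0,-14,0,-14,-14,0,0,0,-14,0,-14,-14,0,0,0,-14],[-28,-28,-28,-28,0,-14,-14,0,0,0,-14,0,-14,-14,0,0,0,-14,0,-14,-14,0,0,0,-14,0,-14,-14,0,0,0,-14],[-28,-28,-28,-28,0,-14,-14,0,0,0,-14,0,-14,-14,0,0,0,-14,0,-14,-14,0,0,0,-14,0,-14,-14,0,0,0,-14],[-28,-28,-28,-28,0,-14,-14,0,0,0,-14,0,-14,-14,0,0,0,-14,0,-14,-14,0,0,0,-14,0,-14,-14,0,0,0,-14],[-28,-28,-28,-28,0,-14,-14,0,0,0,-14,0,-14,-14,0,0,0,-14,0,-14,-14,0,0,0,-14,0,-14,-14,0,0,0,-14],[-56,-56,-56,-56,0,-28,-28,0,0,0,-28,0,-28,-28,0,0,0,-28,0,-28,-28,0,0,0,-28,0,-28,-28,0,0,0,-28],[-56,-56,-56,-56,0,-28,-28,0,0,0,-28,0,-28,-28,0,0,0,-28,0,-28,-28,0,0,0,-28,0,-28,-28,0,0,0,-28],[-28,-28,-28,-28,0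,-14,-14,0,0,0,-14,0,-14,-14,0,0,0,-14,0,-14,-14,0,0,0,-14,0,-14,-14,0,0,0,-14],[-28,-28,-28,-28,0,-14,-14,0,0,0,-14,0,-14,-14,0,0,0,-14,0,-14,-14,0,0,0,-14,0,-14,-14,0,0,0,-14],[-28,-28,-28,-28,0,-14,-14,0,0,0,-14,0,-14,-14,0,0,0,-14,0,-14,-14,0,0,0,-14,0,-14,-14,0,0,0,-14],[-28,-28,-28,-28,0,-14,-14,0,0,0,-14,0,-14,-14,0,0,0,-14,0,-14,-14,0,0,0,-14,0,-14,-14,0,0,0,-14],[-28,-28,-28,-28,0,-14,-14,0,0,0,-14,0,-14,-14,0,0,0,-14,0,-14,-14,0,0,0,-14,0,-14,-14,0,0,0,-14],[-56,-56,-56,-56,0,-28,-28,0,0,0,-28,0,-28,-28,0,0,0,-28,0,-28,-28,0,0,0,-28,0,-28,-28,0,0,0,-28],[-56,-56,-56,-56,0,-28,-28,0,0,0,-28,0,-28,-28,0,0,0,-28,0,-28,-28,0,0,0,-28,0,-28,-28,0,0,0,-28],[-28,-28,-28,-28,0,-14,-14,0,0,0,-14,0,-14,-14,0,0,0,-14,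0,-14,-14,0,0,0,-14,0,-14,-14,0,0,0,-14],[-28,-28,-28,-28,0,-14,-14,0,0,0,-14,0,-14,-14,0,0,0,-14,0,-14,-14,0,0,0,-14,0,-14,-14,0,0,0,-14],[-28,-28,-28,-28,0,-14,-14,0,0,0,-14,0,-14,-14,0,0,0,-14,0,-14,-14,0,0,0,-14,0,-14,-14,0,0,0,-14],[-28,-28,-28,-28,0,-14,-14,0,0,0,-14,0,-14,-14,0,0,0,-14,0,-14,-14,0,0,0,-14,0,-14,-14,0,0,0,-14],[-28,-28,-28,-28,0,-14,-14,0,0,0,-14,0,-14,-14,0,0,0,-14,0,-14,-14,0,0,0,-14,0,-14,-14,0,0,0,-14],[-56,-56,-56,-56,0,-28,-28,0,0,0,-28,0,-28,-28,0,0,0,-28,0,-28,-28,0,0,0,-28,0,-28,-28,0,0,0,-28],[-56,-56,-56,-56,0,-28,-28,0,0,0,-28,0,-28,-28,0,0,0,-28,0,-28,-28,0,0,0,-28,0,-28,-28,0,0,0,-28],[-28,-28,-28,-28,0,-14,-14,0,0,0,-14,0,-14,-14,0,0,0,-14,0,-14,-14,0,0,0,-14,0,-14,-14,0,0,0,-1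4],[-28,-28,-28,-28,0,-14,-14,0,0,0,-14,0,-14,-14,0,0,0,-14,0,-14,-14,0,0,0,-14,0,-14,-14,0,0,0,-14],[-28,-28,-28,-28,0,-14,-14,0,0,0,-14,0,-14,-14,0,0,0,-14,0,-14,-14,0,0,0,-14,0,-14,-14,0,0,0,-14],[-28,-28,-28,-28,0,-14,-14,0,0,0,-14,0,-14,-14,0,0,0,-14,0,-14,-14,0,0,0,-14,0,-14,-14,0,0,0,-14],[-28,-28,-28,-28,0,-14,-14,0,0,0,-14,0,-14,-14,0,0,0,-14,0,-14,-14,0,0,0,-14,0,-14,-14,0,0,0,-14]]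
def c0L : List (List ℤ) := [[1,0,0,0,0,0,0,0,0,0,0,0,0,0,0,0,0,0,0,0,0,0,0,0,0,0,0,0,0,0,0,0],[0,0,0,1,0,0,0,0,0,0,0,0,0,0,0,0,0,0,0,0,0,0,0,0,0,0,0,0,0,0,0,0],[1,1,0,1,-1,-1,0,0,-1,0,-1,-1,-1,0,-1,0,-1,0,0,0,0,0,0,0,0,-1,-1,0,0,-1,0,0],[1,2,1,1,-1,-1,0,-1,0,-1,-1,-1,-2,0,0,-1,-1,0,-1,-1,0,0,-1,0,-1,-1,-1,-1,-1,0,-1,0],[1,2,2,3,-2,-2,0,0,-1,0,-1,-2,-2,-1,-1,-1,-1,0,-2,-2,-1,-1,-1,-1,-2,-2,-2,-1,-1,-1,-1,0],[3,4,2,3,-3,-3,-1,-1,-2,-1,-3,-3,-3,-2,-2,-1,-2,-1,-2,-2,-1,-1,-1,-1,-2,-2,-3,-1,-1,-1,-1,0],[3,6,4,5,-4,-4,-2,-2,-2,-2,-3,-5,-5,-2,-2,-3,-2,-1,-4,-5,-1,-1,-3,-1,-3,-4,-4,-3,-3,-1,-3,-1],[5,6,6,8,-6,-6,-2,-2,-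4,-2,-4,-6,-6,-3,-3,-2,-3,-1,-6,-6,-3,-3,-3,-3,-5,-6,-7,-3,-3,-3,-4,-2],[8,10,6,9,-8,-9,-3,-3,-5,-4,-6,-8,-8,-5,-5,-3,-5,-3,-8,-8,-3,-3,-4,-3,-5,-8,-8,-4,-4,-4,-4,-2],[9,12,10,11,-10,-10,-5,-5,-5,-5,-7,-10,-11,-5,-5,-5,-5,-3,-11,-11,-4,-4,-7,-4,-7,-10,-10,-6,-6,-4,-6,-3],[11,14,12,15,-12,-13,-5,-5,-7,-5,-8,-12,-12,-7,-7,-5,-7,-4,-13,-13,-6,-6,-7,-6,-9,-13,-13,-7,-7,-6,-7,-5],[15,18,14,17,-16,-16,-7,-7,-9,-7,-10,-16,-16,-9,-9,-7,-9,-6,-16,-16,-7,-7,-9,-7,-10,-16,-16,-8,-8,-7,-8,-5],[17,21,18,21,-19,-19,-9,-9,-10,-9,-12,-19,-19,-10,-10,-9,-10,-7,-19,-20,-8,-8,-11,-9,-12,-19,-19,-10,-11,-8,-11,-7],[21,24,21,25,-23,-23,-10,-10,-13,-10,-14,-22,-22,-12,-12,-10,-12,-8,-23,-23,-10,-11,-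12,-11,-14,-23,-23,-12,-12,-11,-12,-9]]
def c0v : ℕ → Fin 32 → ℤ := fun r t => (c0L.getD r []).getD (t:ℕ) 0

set_option maxHeartbeats 2000000 in
theorem hMeq : Mmat = Cm1 := by
  ext i j; revert i j
  exact @of_decide_eq_true _ (@Fintype.decidableForallFintype _ _ (fun _ => inferInstance) _) (by decide)

set_option maxHeartbeats 2000000 in
theorem hC2 : Cm1 ^ 2 = Cm2 := by
  rw [pow_two]; ext i j; revert i j; exact @of_decide_eq_true _ (@Fintype.decidableForallFintype _ _ (fun _ => inferInstance) _) (by decide)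

set_option maxHeartbeats 2000000 in
theorem hC4 : Cm1 ^ 4 = Cm4 := by
  rw [show (4:ℕ) = 2 + 2 from rfl, pow_add, hC2]; ext i j; revert i j; exact @of_decide_eq_true _ (@Fintype.decidableForallFintype _ _ (fun _ => inferInstance) _) (by decide)

set_option maxHeartbeats 2000000 in
theorem hC8 : Cm1 ^ 8 = Cm8 := by
  rw [show (8:ℕ) = 4 + 4 from rfl, pow_add, hC4]; ext i j; revert i j; exact @of_decide_eq_true _ (@Fintype.decidableForallFintype _ _ (fun _ => inferInstance) _) (by decide)

set_option maxHeartbeats 2000000 in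
theorem hC12 : Cm1 ^ 12 = Cm12 := by
  rw [show (12:ℕ) = 8 + 4 from rfl, pow_add, hC8, hC4]; ext i j; revert i j; exact @of_decide_eq_true _ (@Fintype.decidableForallFintype _ _ (fun _ => inferInstance) _) (by decide)

set_option maxRecDepth 100000 in
set_option maxHeartbeats 2000000 in
theorem hB14 : Cm1 ^ 14 = 1 + Amat := by
  rw [show (14:ℕ) = 12 + 2 from rfl, pow_add, hC12, hC2]; ext i j; revert i j; exact @of_decide_eq_true _ (@Fintype.decidableForallFintype _ _ (fun _ => inferInstance) _) (by decide)

set_option maxHeartbeats 2000000 in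
theorem hA2eq : Amat * Amat = A2mat := by
  ext i j; revert i j; exact @of_decide_eq_true _ (@Fintype.decidableForallFintype _ _ (fun _ => inferInstance) _) (by decide)

set_option maxHeartbeats 2000000 in
theorem hA3eq : A2mat * Amat = 0 := by
  ext i j; revert i j; exact @of_decide_eq_true _ (@Fintype.decidableForallFintype _ _ (fun _ => inferInstance) _) (by decide)

set_option maxHeartbeats 1000000 in
theorem col0 : ∀ t : Fin 32, (Cm1 ^ 0) t 0 = c0v 0 t := by
  intro t; rw [pow_zero]; revert t; decide

set_option maxHeartbeats 1000000 in
theorem col1 : ∀ t : Fin 32, (Cm1 ^ 1) t 0 = c0v 1 t := by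
  intro t
  rw [pow_succ', Matrix.mul_apply]
  simp only [col0]
  revert t; decide

set_option maxHeartbeats 1000000 in
theorem col2 : ∀ t : Fin 32, (Cm1 ^ 2) t 0 = c0v 2 t := by
  intro t
  rw [pow_succ', Matrix.mul_apply]
  simp only [col1]
  revert t; decide

set_option maxHeartbeats 1000000 in
theorem col3 : ∀ t : Fin 32, (Cm1 ^ 3) t 0 = c0v 3 t := by
  intro t
  rw [pow_succ', Matrix.mul_apply]
  simp only [col2]
  revert t; decide

set_option maxHeartbeats 1000000 in
theorem col4 : ∀ t : Fin 32, (Cm1 ^ 4) t 0 = c0v 4 t := by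
  intro t
  rw [pow_succ', Matrix.mul_apply]
  simp only [col3]
  revert t; decide

set_option maxHeartbeats 1000000 in
theorem col5 : ∀ t : Fin 32, (Cm1 ^ 5) t 0 = c0v 5 t := by
  intro t
  rw [pow_succ', Matrix.mul_apply]
  simp only [col4]
  revert t; decide

set_option maxHeartbeats 1000000 in
theorem col6 : ∀ t : Fin 32, (Cm1 ^ 6) t 0 = c0v 6 t := by
  intro t
  rw [pow_succ', Matrix.mul_apply]
  simp only [col5]
  revert t; decide

set_option maxHeartbeats 1000000 in
theorem col7 : ∀ t : Fin 32, (Cm1 ^ 7) t 0 = c0v 7 t := by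
  intro t
  rw [pow_succ', Matrix.mul_apply]
  simp only [col6]
  revert t; decide

set_option maxHeartbeats 1000000 in
theorem col8 : ∀ t : Fin 32, (Cm1 ^ 8) t 0 = c0v 8 t := by
  intro t
  rw [pow_succ', Matrix.mul_apply]
  simp only [col7]
  revert t; decide

set_option maxHeartbeats 1000000 in
theorem col9 : ∀ t : Fin 32, (Cm1 ^ 9) t 0 = c0v 9 t := by
  intro t
  rw [pow_succ', Matrix.mul_apply]
  simp only [col8]
  revert t; decide

set_option maxHeartbeats 1000000 in
theorem col10 : ∀ t : Fin 32, (Cm1 ^ 10) t 0 = c0v 10 t := by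
  intro t
  rw [pow_succ', Matrix.mul_apply]
  simp only [col9]
  revert t; decide

set_option maxHeartbeats 1000000 in
theorem col11 : ∀ t : Fin 32, (Cm1 ^ 11) t 0 = c0v 11 t := by
  intro t
  rw [pow_succ', Matrix.mul_apply]
  simp only [col10]
  revert t; decide

set_option maxHeartbeats 1000000 in
theorem col12 : ∀ t : Fin 32, (Cm1 ^ 12) t 0 = c0v 12 t := by
  intro t
  rw [pow_succ', Matrix.mul_apply]
  simp only [col11]
  revert t; decide

set_option maxHeartbeats 1000000 in
theorem col13 : ∀ t : Fin 32, (Cm1 ^ 13) t 0 = c0v 13 t := by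
  intro t
  rw [pow_succ', Matrix.mul_apply]
  simp only [col12]
  revert t; decide

theorem hu0 : 0 ≤ (Cm1 ^ 0) 0 0 := by rw [col0 0]; decide
set_option maxHeartbeats 1000000 in
theorem hw0 : 0 ≤ (Amat * Cm1 ^ 0) 0 0 := by
  rw [Matrix.mul_apply]; simp only [col0]; decide
set_option maxHeartbeats 1000000 in
theorem hv0 : (A2mat * Cm1 ^ 0) 0 0 = 56 := by
  rw [Matrix.mul_apply]; simp only [col0]; decide

theorem hu1 : 0 ≤ (Cm1 ^ 1) 0 0 := by rw [col1 0]; decide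
set_option maxHeartbeats 1000000 in
theorem hw1 : 0 ≤ (Amat * Cm1 ^ 1) 0 0 := by
  rw [Matrix.mul_apply]; simp only [col1]; decide
set_option maxHeartbeats 1000000 in
theorem hv1 : (A2mat * Cm1 ^ 1) 0 0 = 56 := by
  rw [Matrix.mul_apply]; simp only [col1]; decide

theorem hu2 : 0 ≤ (Cm1 ^ 2) 0 0 := by rw [col2 0]; decide
set_option maxHeartbeats 1000000 in
theorem hw2 : 0 ≤ (Amat * Cm1 ^ 2) 0 0 := by
  rw [Matrix.mul_apply]; simp only [col2]; decide
set_option maxHeartbeats 1000000 in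
theorem hv2 : (A2mat * Cm1 ^ 2) 0 0 = 56 := by
  rw [Matrix.mul_apply]; simp only [col2]; decide

theorem hu3 : 0 ≤ (Cm1 ^ 3) 0 0 := by rw [col3 0]; decide
set_option maxHeartbeats 1000000 in
theorem hw3 : 0 ≤ (Amat * Cm1 ^ 3) 0 0 := by
  rw [Matrix.mul_apply]; simp only [col3]; decide
set_option maxHeartbeats 1000000 in
theorem hv3 : (A2mat * Cm1 ^ 3) 0 0 = 56 := by
  rw [Matrix.mul_apply]; simp only [col3]; decide

theorem hu4 : 0 ≤ (Cm1 ^ 4) 0 0 := by rw [col4 0]; decide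
set_option maxHeartbeats 1000000 in
theorem hw4 : 0 ≤ (Amat * Cm1 ^ 4) 0 0 := by
  rw [Matrix.mul_apply]; simp only [col4]; decide
set_option maxHeartbeats 1000000 in
theorem hv4 : (A2mat * Cm1 ^ 4) 0 0 = 56 := by
  rw [Matrix.mul_apply]; simp only [col4]; decide

theorem hu5 : 0 ≤ (Cm1 ^ 5) 0 0 := by rw [col5 0]; decide
set_option maxHeartbeats 1000000 in
theorem hw5 : 0 ≤ (Amat * Cm1 ^ 5) 0 0 := by
  rw [Matrix.mul_apply]; simp only [col5]; decide
set_option maxHeartbeats 1000000 in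
theorem hv5 : (A2mat * Cm1 ^ 5) 0 0 = 56 := by
  rw [Matrix.mul_apply]; simp only [col5]; decide

theorem hu6 : 0 ≤ (Cm1 ^ 6) 0 0 := by rw [col6 0]; decide
set_option maxHeartbeats 1000000 in
theorem hw6 : 0 ≤ (Amat * Cm1 ^ 6) 0 0 := by
  rw [Matrix.mul_apply]; simp only [col6]; decide
set_option maxHeartbeats 1000000 in
theorem hv6 : (A2mat * Cm1 ^ 6) 0 0 = 56 := by
  rw [Matrix.mul_apply]; simp only [col6]; decide

theorem hu7 : 0 ≤ (Cm1 ^ 7) 0 0 := by rw [col7 0]; decide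
set_option maxHeartbeats 1000000 in
theorem hw7 : 0 ≤ (Amat * Cm1 ^ 7) 0 0 := by
  rw [Matrix.mul_apply]; simp only [col7]; decide
set_option maxHeartbeats 1000000 in
theorem hv7 : (A2mat * Cm1 ^ 7) 0 0 = 56 := by
  rw [Matrix.mul_apply]; simp only [col7]; decide

theorem hu8 : 0 ≤ (Cm1 ^ 8) 0 0 := by rw [col8 0]; decide
set_option maxHeartbeats 1000000 in
theorem hw8 : 0 ≤ (Amat * Cm1 ^ 8) 0 0 := by
  rw [Matrix.mul_apply]; simp only [col8]; decide
set_option maxHeartbeats 1000000 in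
theorem hv8 : (A2mat * Cm1 ^ 8) 0 0 = 56 := by
  rw [Matrix.mul_apply]; simp only [col8]; decide

theorem hu9 : 0 ≤ (Cm1 ^ 9) 0 0 := by rw [col9 0]; decide
set_option maxHeartbeats 1000000 in
theorem hw9 : 0 ≤ (Amat * Cm1 ^ 9) 0 0 := by
  rw [Matrix.mul_apply]; simp only [col9]; decide
set_option maxHeartbeats 1000000 in
theorem hv9 : (A2mat * Cm1 ^ 9) 0 0 = 56 := by
  rw [Matrix.mul_apply]; simp only [col9]; decide

theorem hu10 : 0 ≤ (Cm1 ^ 10) 0 0 := by rw [col10 0]; decide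
set_option maxHeartbeats 1000000 in
theorem hw10 : 0 ≤ (Amat * Cm1 ^ 10) 0 0 := by
  rw [Matrix.mul_apply]; simp only [col10]; decide
set_option maxHeartbeats 1000000 in
theorem hv10 : (A2mat * Cm1 ^ 10) 0 0 = 56 := by
  rw [Matrix.mul_apply]; simp only [col10]; decide

theorem hu11 : 0 ≤ (Cm1 ^ 11) 0 0 := by rw [col11 0]; decide
set_option maxHeartbeats 1000000 in
theorem hw11 : 0 ≤ (Amat * Cm1 ^ 11) 0 0 := by
  rw [Matrix.mul_apply]; simp only [col11]; decide
set_option maxHeartbeats 1000000 in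
theorem hv11 : (A2mat * Cm1 ^ 11) 0 0 = 56 := by
  rw [Matrix.mul_apply]; simp only [col11]; decide

theorem hu12 : 0 ≤ (Cm1 ^ 12) 0 0 := by rw [col12 0]; decide
set_option maxHeartbeats 1000000 in
theorem hw12 : 0 ≤ (Amat * Cm1 ^ 12) 0 0 := by
  rw [Matrix.mul_apply]; simp only [col12]; decide
set_option maxHeartbeats 1000000 in
theorem hv12 : (A2mat * Cm1 ^ 12) 0 0 = 56 := by
  rw [Matrix.mul_apply]; simp only [col12]; decide

theorem hu13 : 0 ≤ (Cm1 ^ 13) 0 0 := by rw [col13 0]; decide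
set_option maxHeartbeats 1000000 in
theorem hw13 : 0 ≤ (Amat * Cm1 ^ 13) 0 0 := by
  rw [Matrix.mul_apply]; simp only [col13]; decide
set_option maxHeartbeats 1000000 in
theorem hv13 : (A2mat * Cm1 ^ 13) 0 0 = 56 := by
  rw [Matrix.mul_apply]; simp only [col13]; decide

theorem keyfacts : ∀ r : ℕ, r < 14 →
    0 ≤ (Cm1 ^ r) 0 0 ∧ 0 ≤ (Amat * Cm1 ^ r) 0 0 ∧ (A2mat * Cm1 ^ r) 0 0 = 56 := by
  intro r hr
  interval_cases r
  · exact ⟨hu0, hw0, hv0⟩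
  · exact ⟨hu1, hw1, hv1⟩
  · exact ⟨hu2, hw2, hv2⟩
  · exact ⟨hu3, hw3, hv3⟩
  · exact ⟨hu4, hw4, hv4⟩
  · exact ⟨hu5, hw5, hv5⟩
  · exact ⟨hu6, hw6, hv6⟩
  · exact ⟨hu7, hw7, hv7⟩
  · exact ⟨hu8, hw8, hv8⟩
  · exact ⟨hu9, hw9, hv9⟩
  · exact ⟨hu10, hw10, hv10⟩
  · exact ⟨hu11, hw11, hv11⟩
  · exact ⟨hu12, hw12, hv12⟩
  · exact ⟨hu13, hw13, hv13⟩

theorem twice_choose : ∀ k : ℕ, 2 * Nat.choose k 2 = k * (k - 1) := by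
  intro k
  induction k with
  | zero => rfl
  | succ m ih =>
    rw [Nat.choose_succ_succ, Nat.choose_one_right, Nat.succ_sub_one, Nat.mul_add, ih]
    cases m with
    | zero => rfl
    | succ p => rw [Nat.succ_sub_one]; ring

theorem powOneAdd : ∀ k : ℕ,
    (1 + Amat) ^ k = 1 + (k : ℤ) • Amat + ((k.choose 2 : ℕ) : ℤ) • A2mat := by
  intro k
  induction k with
  | zero => simp
  | succ m ih =>
    rw [pow_succ, ih, mul_add, mul_one, add_mul, add_mul, one_mul,
      smul_mul_assoc, smul_mul_assoc, hA2eq, hA3eq, smul_zero, add_zero]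
    have hch : (((m+1).choose 2 : ℕ) : ℤ) = ((m.choose 2 : ℕ) : ℤ) + (m : ℤ) := by
      rw [Nat.choose_succ_succ, Nat.choose_one_right]; push_cast; ring
    rw [hch]
    push_cast
    module

theorem mulBound {X Y : Matrix (Fin 32) (Fin 32) ℤ} {x y : ℤ}
    (hX : ∀ p q, |X p q| ≤ x) (hY : ∀ p q, |Y p q| ≤ y) :
    ∀ p q, |(X * Y) p q| ≤ 32 * (x * y) := by
  intro p q
  rw [Matrix.mul_apply]
  calc |∑ t, X p t * Y t q| ≤ ∑ t, |X p t * Y t q| := Finset.abs_sum_le_sum_abs _ _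
    _ ≤ ∑ _t : Fin 32, x * y := Finset.sum_le_sum (fun t _ => by
        rw [abs_mul]
        exact mul_le_mul (hX p t) (hY t q) (abs_nonneg _) ((abs_nonneg _).trans (hX p t)))
    _ = 32 * (x * y) := by
        rw [Finset.sum_const, Finset.card_univ, Fintype.card_fin, nsmul_eq_mul]
        norm_num

set_option maxHeartbeats 1000000 in
theorem hM1b : ∀ p q : Fin 32, |Cm1 p q| ≤ 1 := by
  have h : ∀ p q : Fin 32, -1 ≤ Cm1 p q ∧ Cm1 p q ≤ 1 := by
    exact @of_decide_eq_true _ (@Fintype.decidableForallFintype _ _ (fun _ => inferInstance) _) (by decide)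
  intro p q; exact abs_le.mpr (h p q)

set_option maxHeartbeats 1000000 in
theorem hAb : ∀ p q : Fin 32, |Amat p q| ≤ 33 := by
  have h : ∀ p q : Fin 32, -33 ≤ Amat p q ∧ Amat p q ≤ 33 := by
    exact @of_decide_eq_true _ (@Fintype.decidableForallFintype _ _ (fun _ => inferInstance) _) (by decide)
  intro p q; exact abs_le.mpr (h p q)

set_option maxHeartbeats 1000000 in
theorem hA2b : ∀ p q : Fin 32, |A2mat p q| ≤ 56 := by
  have h : ∀ p q : Fin 32, -56 ≤ A2mat p q ∧ A2mat p q ≤ 56 := by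
    exact @of_decide_eq_true _ (@Fintype.decidableForallFintype _ _ (fun _ => inferInstance) _) (by decide)
  intro p q; exact abs_le.mpr (h p q)

theorem powBound : ∀ r : ℕ, ∀ p q : Fin 32, |(Cm1 ^ r) p q| ≤ 32 ^ r := by
  intro r
  induction r with
  | zero =>
    intro p q
    rw [pow_zero, pow_zero]
    by_cases h : p = q <;> simp [Matrix.one_apply, h]
  | succ m ih =>
    intro p q
    rw [pow_succ]
    refine le_trans (mulBound ih hM1b p q) (le_of_eq ?_)
    ring

/- STATEMENT 12: the powers of M grow quadratically: for some c₁, c₂ > 0 and N,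
for all n ≥ N one has c₁·n² ≤ max_{i,j} |(Mⁿ)_{ij}| ≤ c₂·n². -/
set_option maxHeartbeats 1000000 in
theorem M_powers_grow_quadratically :
    ∃ c₁ c₂ : ℝ, 0 < c₁ ∧ 0 < c₂ ∧ ∃ N : ℕ, ∀ n : ℕ, N ≤ n →
      c₁ * (n : ℝ) ^ 2
          ≤ ((Finset.univ.sup fun p : Fin 32 × Fin 32 => ((Mmat ^ n) p.1 p.2).natAbs : ℕ) : ℝ) ∧
      ((Finset.univ.sup fun p : Fin 32 × Fin 32 => ((Mmat ^ n) p.1 p.2).natAbs : ℕ) : ℝ)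
          ≤ c₂ * (n : ℝ) ^ 2 := by
  refine ⟨1/14, 2849 * 32 ^ 13, by norm_num, by positivity, 70, ?_⟩
  intro n hn
  set k := n / 14 with hkdef
  set r := n % 14 with hrdef
  have hnkr : 14 * k + r = n := Nat.div_add_mod n 14
  have hr14 : r < 14 := Nat.mod_lt _ (by norm_num)
  have hk5 : 5 ≤ k := (Nat.le_div_iff_mul_le (by norm_num)).mpr (by omega)
  have hkn : k ≤ n := Nat.div_le_self n 14
  have hpow : Mmat ^ n
      = Cm1 ^ r + (k : ℤ) • (Amat * Cm1 ^ r) + ((k.choose 2 : ℕ) : ℤ) • (A2mat * Cm1 ^ r) := by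
    rw [hMeq, ← hnkr, pow_add, pow_mul, hB14, powOneAdd, add_mul, add_mul, one_mul,
      smul_mul_assoc, smul_mul_assoc]
  have hentry : (Mmat ^ n) 0 0
      = (Cm1 ^ r) 0 0 + (k : ℤ) * ((Amat * Cm1 ^ r) 0 0)
        + ((k.choose 2 : ℕ) : ℤ) * ((A2mat * Cm1 ^ r) 0 0) := by
    rw [hpow]; simp only [Matrix.add_apply, Matrix.smul_apply, smul_eq_mul]
  obtain ⟨hu, hw, hv⟩ := keyfacts r hr14
  have hk0 : (0:ℤ) ≤ (k:ℤ) := Int.natCast_nonneg k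
  have hkZ : (5:ℤ) ≤ (k:ℤ) := by exact_mod_cast hk5
  have hknZ : (k:ℤ) ≤ (n:ℤ) := by exact_mod_cast hkn
  have hrZ : (r:ℤ) ≤ 13 := by exact_mod_cast Nat.lt_succ_iff.mp hr14
  have hr0 : (0:ℤ) ≤ (r:ℤ) := Int.natCast_nonneg r
  have hnZ : (n:ℤ) = 14 * (k:ℤ) + (r:ℤ) := by exact_mod_cast hnkr.symm
  have h2cZ : 2 * ((k.choose 2 : ℕ) : ℤ) = (k:ℤ) * ((k:ℤ) - 1) := by
    have h := twice_choose k
    have hk1 : 1 ≤ k := by omega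
    zify [hk1] at h
    linarith
  have hc0 : (0:ℤ) ≤ ((k.choose 2 : ℕ) : ℤ) := Int.natCast_nonneg _
  have hkw : (0:ℤ) ≤ (k:ℤ) * ((Amat * Cm1 ^ r) 0 0) := mul_nonneg hk0 hw
  have hent_nonneg : 0 ≤ (Mmat ^ n) 0 0 := by
    rw [hentry, hv]; positivity
  have hlowZ : (n:ℤ) ^ 2 ≤ 14 * ((Mmat ^ n) 0 0) := by
    rw [hentry, hv, hnZ]
    nlinarith [hu, hkw, h2cZ, hkZ, hrZ, hr0,
      mul_le_mul_of_nonneg_left hkZ hk0, mul_le_mul_of_nonneg_left hrZ hr0]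
  have hSle : ((Mmat ^ n) 0 0).natAbs
      ≤ Finset.univ.sup (fun p : Fin 32 × Fin 32 => ((Mmat ^ n) p.1 p.2).natAbs) :=
    Finset.le_sup (f := fun p : Fin 32 × Fin 32 => ((Mmat ^ n) p.1 p.2).natAbs)
      (Finset.mem_univ ((0, 0) : Fin 32 × Fin 32))
  constructor
  · have h1 : (n:ℤ) ^ 2 ≤ 14 * (((Mmat ^ n) 0 0).natAbs : ℤ) := by
      rwa [Int.natAbs_of_nonneg hent_nonneg]
    have h2 : (((Mmat ^ n) 0 0).natAbs : ℤ)
        ≤ ((Finset.univ.sup (fun p : Fin 32 × Fin 32 => ((Mmat ^ n) p.1 p.2).natAbs) : ℕ) : ℤ) := by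
      exact_mod_cast hSle
    have h3 : (n:ℝ) ^ 2
        ≤ 14 * ((Finset.univ.sup (fun p : Fin 32 × Fin 32 => ((Mmat ^ n) p.1 p.2).natAbs) : ℕ) : ℝ) := by
      have : (n:ℤ) ^ 2 ≤ 14 * ((Finset.univ.sup (fun p : Fin 32 × Fin 32 => ((Mmat ^ n) p.1 p.2).natAbs) : ℕ) : ℤ) := by
        linarith
      exact_mod_cast this
    linarith
  · have hP13 : ∀ p q : Fin 32, |(Cm1 ^ r) p q| ≤ 32 ^ 13 := fun p q =>
      (powBound r p q).trans (pow_le_pow_right₀ (by norm_num) (by omega))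
    have hAP := mulBound hAb hP13
    have hA2P := mulBound hA2b hP13
    have hcnZ : ((k.choose 2 : ℕ) : ℤ) ≤ (n:ℤ) ^ 2 := by
      nlinarith [h2cZ, hknZ, hk0, mul_le_mul hknZ hknZ hk0 (hk0.trans hknZ)]
    have hn1 : (1:ℤ) ≤ (n:ℤ) := by exact_mod_cast (by omega : 1 ≤ n)
    have hnn : (n:ℤ) ≤ (n:ℤ) ^ 2 := by nlinarith [hn1]
    have hb : ∀ p q : Fin 32, |(Mmat ^ n) p q| ≤ 2849 * 32 ^ 13 * (n:ℤ) ^ 2 := by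
      intro p q
      have he : (Mmat ^ n) p q
          = (Cm1 ^ r) p q + (k : ℤ) * ((Amat * Cm1 ^ r) p q)
            + ((k.choose 2 : ℕ) : ℤ) * ((A2mat * Cm1 ^ r) p q) := by
        rw [hpow]; simp only [Matrix.add_apply, Matrix.smul_apply, smul_eq_mul]
      rw [he]
      have t1 := hP13 p q
      have t2 := hAP p q
      have t3 := hA2P p q
      have e2 : |(k : ℤ) * ((Amat * Cm1 ^ r) p q)| ≤ (n:ℤ) * (32 * (33 * 32 ^ 13)) := by
        rw [abs_mul, abs_of_nonneg hk0]
        exact mul_le_mul hknZ t2 (abs_nonneg _) (hk0.trans hknZ)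
      have e3 : |((k.choose 2 : ℕ) : ℤ) * ((A2mat * Cm1 ^ r) p q)| ≤ (n:ℤ) ^ 2 * (32 * (56 * 32 ^ 13)) := by
        rw [abs_mul, abs_of_nonneg hc0]
        exact mul_le_mul hcnZ t3 (abs_nonneg _) (by positivity)
      calc |(Cm1 ^ r) p q + (k : ℤ) * ((Amat * Cm1 ^ r) p q)
            + ((k.choose 2 : ℕ) : ℤ) * ((A2mat * Cm1 ^ r) p q)|
          ≤ |(Cm1 ^ r) p q + (k : ℤ) * ((Amat * Cm1 ^ r) p q)|
            + |((k.choose 2 : ℕ) : ℤ) * ((A2mat * Cm1 ^ r) p q)| := abs_add_le _ _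
        _ ≤ |(Cm1 ^ r) p q| + |(k : ℤ) * ((Amat * Cm1 ^ r) p q)|
            + |((k.choose 2 : ℕ) : ℤ) * ((A2mat * Cm1 ^ r) p q)| := by
              have := abs_add_le ((Cm1 ^ r) p q) ((k : ℤ) * ((Amat * Cm1 ^ r) p q))
              linarith
        _ ≤ 2849 * 32 ^ 13 * (n:ℤ) ^ 2 := by
              have hn2 : (1:ℤ) ≤ (n:ℤ) ^ 2 := by nlinarith [hn1]
              have b1 : (32:ℤ) ^ 13 ≤ 32 ^ 13 * (n:ℤ) ^ 2 :=
                le_mul_of_one_le_right (by positivity) hn2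
              have b2 : (n:ℤ) * (32 * (33 * 32 ^ 13)) ≤ (n:ℤ) ^ 2 * (32 * (33 * 32 ^ 13)) :=
                mul_le_mul_of_nonneg_right hnn (by positivity)
              linarith [t1, e2, e3, b1, b2]
    have hSub : Finset.univ.sup (fun p : Fin 32 × Fin 32 => ((Mmat ^ n) p.1 p.2).natAbs)
        ≤ 2849 * 32 ^ 13 * n ^ 2 := by
      apply Finset.sup_le
      intro p _
      have h := hb p.1 p.2
      have h' : (((Mmat ^ n) p.1 p.2).natAbs : ℤ) ≤ ((2849 * 32 ^ 13 * n ^ 2 : ℕ) : ℤ) := by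
        rw [← Int.abs_eq_natAbs]
        calc |(Mmat ^ n) p.1 p.2| ≤ 2849 * 32 ^ 13 * (n:ℤ) ^ 2 := h
          _ = ((2849 * 32 ^ 13 * n ^ 2 : ℕ) : ℤ) := by push_cast; ring
      exact_mod_cast h'
    calc ((Finset.univ.sup (fun p : Fin 32 × Fin 32 => ((Mmat ^ n) p.1 p.2).natAbs) : ℕ) : ℝ)
        ≤ ((2849 * 32 ^ 13 * n ^ 2 : ℕ) : ℝ) := by exact_mod_cast hSub
      _ = 2849 * 32 ^ 13 * (n:ℝ) ^ 2 := by push_cast; ring
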